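/- Let G be a finite non-abelian group. (1) For every maximal abelian subgroup A of G, the set N_A := {x ∈ A : K_G(x) ⊆ A} (the union of the conjugacy classes of G that are contained in A) is the underlying set of a normal abelian subgroup of G. (2) Every maximal normal abelian subgroup N of G (a normal abelian subgroup not properly contained in any normal abelian subgroup) satisfies N = N_A for some maximal abelian subgroup A of G. -/

import Mathlib

/-- The conjugacy class of `a` in `G`. -/
def conjClass {G : Type*} [Group G] (a : G) : Set G :=
  {x : G | ∃ g : G, g * a * g⁻¹ = x}

/-- The subgroup of elements of `A` whose whole conjugacy class lies in `A`. -/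
def NA {G : Type*} [Group G] (A : Subgroup G) : Subgroup G where
  carrier := {x : G | x ∈ A ∧ conjClass x ⊆ (A : Set G)}
  one_mem' := ⟨A.one_mem, by rintro x ⟨g, rfl⟩; simpa using A.one_mem⟩
  mul_mem' := by
    rintro a b ⟨haA, ha⟩ ⟨hbA, hb⟩
    refine ⟨A.mul_mem haA hbA, ?_⟩
    rintro x ⟨g, rfl⟩
    have h := A.mul_mem (ha ⟨g, rfl⟩) (hb ⟨g, rfl⟩)
    have : (g * a * g⁻¹) * (g * b * g⁻¹) = g * (a * b) * g⁻¹ := by group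
    rwa [this] at h
  inv_mem' := by
    rintro a ⟨haA, ha⟩
    refine ⟨A.inv_mem haA, ?_⟩
    rintro x ⟨g, rfl⟩
    have h := A.inv_mem (ha ⟨g, rfl⟩)
    have : (g * a * g⁻¹)⁻¹ = g * a⁻¹ * g⁻¹ := by group
    rwa [this] at h

theorem NA_normal {G : Type*} [Group G] (A : Subgroup G) : (NA A).Normal := by
  constructor
  rintro n ⟨hnA, hn⟩ g
  refine ⟨hn ⟨g, rfl⟩, ?_⟩
  rintro x ⟨h, rfl⟩
  have := hn ⟨h * g, rfl⟩
  have e : (h * g) * n * (h * g)⁻¹ = h * (g * n * g⁻¹) * h⁻¹ := by group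
  rwa [e] at this

theorem le_NA_of_normal {G : Type*} [Group G] {N A : Subgroup G} (hN : N.Normal)
    (h : N ≤ A) : N ≤ NA A := by
  intro x hx
  refine ⟨h hx, ?_⟩
  rintro y ⟨g, rfl⟩
  exact h (hN.conj_mem x hx g)

theorem maximal_normal_abelian_subgroups_from_maximal_abelian
    {G : Type*} [Group G] [Finite G] (hG : ∃ x y : G, x * y ≠ y * x) :
    (∀ A : Subgroup G, (∀ x ∈ A, ∀ y ∈ A, x * y = y * x) →
      (∀ A' : Subgroup G, (∀ x ∈ A', ∀ y ∈ A', x * y = y * x) → A ≤ A' → A = A') →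
      ∃ N : Subgroup G, (N : Set G) = {x : G | x ∈ A ∧ conjClass x ⊆ (A : Set G)} ∧
        N.Normal ∧ (∀ x ∈ N, ∀ y ∈ N, x * y = y * x))
    ∧
    (∀ N : Subgroup G, N.Normal → (∀ x ∈ N, ∀ y ∈ N, x * y = y * x) →
      (∀ N' : Subgroup G, N'.Normal → (∀ x ∈ N', ∀ y ∈ N', x * y = y * x) → N ≤ N' → N = N') →
      ∃ A : Subgroup G, (∀ x ∈ A, ∀ y ∈ A, x * y = y * x) ∧
        (∀ A' : Subgroup G, (∀ x ∈ A', ∀ y ∈ A', x * y = y * x) → A ≤ A' → A = A') ∧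
        (N : Set G) = {x : G | x ∈ A ∧ conjClass x ⊆ (A : Set G)}) := by
  constructor
  · intro A hA _
    exact ⟨NA A, rfl, NA_normal A, fun x hx y hy => hA x hx.1 y hy.1⟩
  · intro N hNnorm hNab hNmax
    -- find a maximal abelian subgroup containing N
    obtain ⟨A, ⟨hAab, hNA⟩, hAmax⟩ := Set.Finite.exists_maximalFor (id : Subgroup G → Subgroup G)
      {B : Subgroup G | (∀ x ∈ B, ∀ y ∈ B, x * y = y * x) ∧ N ≤ B} (Set.toFinite _)
      ⟨N, hNab, le_rfl⟩
    have hAmax' : ∀ A' : Subgroup G, (∀ x ∈ A', ∀ y ∈ A', x * y = y * x) → A ≤ A' → A = A' := by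
      intro A' hA' hle
      exact le_antisymm hle (hAmax ⟨hA', le_trans hNA hle⟩ hle)
    refine ⟨A, hAab, hAmax', ?_⟩
    have h1 : N ≤ NA A := le_NA_of_normal hNnorm hNA
    have h2 : N = NA A := hNmax (NA A) (NA_normal A)
      (fun x hx y hy => hAab x hx.1 y hy.1) h1
    rw [h2]; rfl
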